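/- Let n ≥ p ≥ 1, α = √2/2, β = 1 − √2/2, and let X ∈ ℝ^{n×p} satisfy XᵀX = I_p. For 1 ≤ u ≤ n, 1 ≤ v ≤ p set P_{uv}(X) = E_{uv} − α X E_{uv}ᵀ X − β X Xᵀ E_{uv}. Then for all indices 1 ≤ i,k ≤ n and 1 ≤ j,l ≤ p, ∑_{u=1}^{n} ∑_{v=1}^{p} (P_{uv}(X))_{ij} (P_{uv}(X))_{kl} = δ_{ik} δ_{jl} − X_{il} X_{kj}, where δ is the Kronecker delta. -/

import Mathlib

open Matrix

/-- The projected field `P_{uv}(X) = E_{uv} - α X E_{uv}ᵀ X - β X Xᵀ E_{uv}` with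
`α = √2/2`, `β = 1 - √2/2`. -/
noncomputable def projField {n p : ℕ} (X : Matrix (Fin n) (Fin p) ℝ)
    (u : Fin n) (v : Fin p) : Matrix (Fin n) (Fin p) ℝ :=
  Matrix.single u v (1 : ℝ)
    - (Real.sqrt 2 / 2) • (X * (Matrix.single u v (1 : ℝ))ᵀ * X)
    - (1 - Real.sqrt 2 / 2) • (X * Xᵀ * Matrix.single u v (1 : ℝ))

lemma entry {n p : ℕ} (X : Matrix (Fin n) (Fin p) ℝ) (u a : Fin n) (v b : Fin p) :
    projField X u v a b = (if u = a then (1:ℝ) else 0) * (if v = b then 1 else 0)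
      - (Real.sqrt 2 / 2) * (X a v * X u b)
      - (1 - Real.sqrt 2 / 2) * ((X * Xᵀ) a u * (if v = b then 1 else 0)) := by
  have h1 : Matrix.single u v (1:ℝ) a b
      = (if u = a then (1:ℝ) else 0) * (if v = b then 1 else 0) := by
    by_cases h : u = a <;> by_cases h' : v = b <;> simp [Matrix.single, h, h']
  have h2 : (X * (Matrix.single u v (1:ℝ))ᵀ * X) a b = X a v * X u b := by
    simp [Matrix.mul_apply, Matrix.single, Finset.sum_mul, ite_and]
  have h3 : (X * Xᵀ * Matrix.single u v (1:ℝ)) a b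
      = (X * Xᵀ) a u * (if v = b then 1 else 0) := by
    by_cases h' : v = b <;> simp [Matrix.mul_apply, Matrix.single, ite_and, h']
  simp only [projField, Matrix.sub_apply, Matrix.smul_apply, smul_eq_mul, h1, h2, h3]

/-- the diffusion covariance of the projected fields:
`∑_{u,v} (P_{uv}(X))_{ij} (P_{uv}(X))_{kl} = δ_{ik} δ_{jl} - X_{il} X_{kj}`. -/
theorem proj_field_covariance (n p : ℕ) (hp : 1 ≤ p) (hpn : p ≤ n)
    (X : Matrix (Fin n) (Fin p) ℝ) (hX : Xᵀ * X = 1)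
    (i k : Fin n) (j l : Fin p) :
    ∑ u : Fin n, ∑ v : Fin p, projField X u v i j * projField X u v k l
      = (if i = k then (1 : ℝ) else 0) * (if j = l then (1 : ℝ) else 0)
        - X i l * X k j := by
  set s : ℝ := Real.sqrt 2 / 2 with hs_def
  set A : Matrix (Fin n) (Fin n) ℝ := X * Xᵀ with hA_def
  have hs : s * s = 1 / 2 := by
    rw [hs_def, div_mul_div_comm, Real.mul_self_sqrt (by norm_num)]
    norm_num
  -- contraction identities
  have hcol : ∀ (a c : Fin p), ∑ u : Fin n, X u a * X u c = if a = c then (1:ℝ) else 0 := by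
    intro a c
    have := congrArg (fun M => M a c) hX
    simpa only [Matrix.mul_apply, Matrix.transpose_apply, Matrix.one_apply] using this
  have hAX : A * X = X := by rw [hA_def, Matrix.mul_assoc, hX, Matrix.mul_one]
  have hS6 : ∀ (a : Fin n) (c : Fin p), ∑ u : Fin n, A a u * X u c = X a c := by
    intro a c
    have := congrArg (fun M => M a c) hAX
    simpa [Matrix.mul_apply] using this
  have hsym : ∀ a c : Fin n, A a c = A c a := by
    intro a c
    simp [hA_def, Matrix.mul_apply, mul_comm]
  have hS4 : ∀ a c : Fin n, ∑ u : Fin n, A a u * A c u = A a c := by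
    intro a c
    have hAA : A * A = A := by
      rw [hA_def, Matrix.mul_assoc, ← Matrix.mul_assoc Xᵀ, hX, Matrix.one_mul]
    have := congrArg (fun M => M a c) hAA
    have h2 : ∑ u : Fin n, A a u * A u c = A a c := by
      simpa [Matrix.mul_apply] using this
    calc ∑ u : Fin n, A a u * A c u = ∑ u : Fin n, A a u * A u c := by
          refine Finset.sum_congr rfl fun u _ => by rw [hsym c u]
      _ = A a c := h2
  -- v-atoms
  have V1 : ∑ v : Fin p, (if v = j then (1:ℝ) else 0) * (if v = l then 1 else 0)
      = if j = l then (1:ℝ) else 0 := by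
    simp [ite_and, Finset.sum_ite_eq', eq_comm]
  have V2 : ∀ c : Fin n, ∑ v : Fin p, (if v = j then (1:ℝ) else 0) * X c v = X c j := by
    intro c; simp
  have V3 : ∀ c : Fin n, ∑ v : Fin p, X c v * (if v = l then (1:ℝ) else 0) = X c l := by
    intro c; simp
  have V4 : ∀ a c : Fin n, ∑ v : Fin p, X a v * X c v = A a c := by
    intro a c; simp [hA_def, Matrix.mul_apply]
  -- inner sum
  have inner : ∀ u : Fin n,
      ∑ v : Fin p, projField X u v i j * projField X u v k l
      = ((if u = i then (1:ℝ) else 0) - (1 - s) * A i u)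
          * ((if u = k then (1:ℝ) else 0) - (1 - s) * A k u) * (if j = l then 1 else 0)
        + (-(s * X u l * ((if u = i then (1:ℝ) else 0) - (1 - s) * A i u))) * X k j
        + (-(s * X u j * ((if u = k then (1:ℝ) else 0) - (1 - s) * A k u))) * X i l
        + (s * s * (X u j * X u l)) * A i k := by
    intro u
    have expand : ∀ v : Fin p,
        projField X u v i j * projField X u v k l
        = (((if u = i then (1:ℝ) else 0) - (1 - s) * A i u)
            * ((if u = k then (1:ℝ) else 0) - (1 - s) * A k u))
            * ((if v = j then (1:ℝ) else 0) * (if v = l then 1 else 0))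
          + (-(s * X u l * ((if u = i then (1:ℝ) else 0) - (1 - s) * A i u)))
            * ((if v = j then (1:ℝ) else 0) * X k v)
          + (-(s * X u j * ((if u = k then (1:ℝ) else 0) - (1 - s) * A k u)))
            * (X i v * (if v = l then (1:ℝ) else 0))
          + (s * s * (X u j * X u l)) * (X i v * X k v) := by
      intro v
      simp only [entry, hA_def]
      ring
    rw [Finset.sum_congr rfl fun v _ => expand v]
    simp only [Finset.sum_add_distrib, ← Finset.mul_sum]
    rw [V1, V2 k, V3 i, V4 i k]
  rw [Finset.sum_congr rfl fun u _ => inner u]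
  -- expand outer sum into atoms over u
  have expand2 : ∀ u : Fin n,
      ((if u = i then (1:ℝ) else 0) - (1 - s) * A i u)
          * ((if u = k then (1:ℝ) else 0) - (1 - s) * A k u) * (if j = l then 1 else 0)
        + (-(s * X u l * ((if u = i then (1:ℝ) else 0) - (1 - s) * A i u))) * X k j
        + (-(s * X u j * ((if u = k then (1:ℝ) else 0) - (1 - s) * A k u))) * X i l
        + (s * s * (X u j * X u l)) * A i k
      = (if j = l then (1:ℝ) else 0)
          * ((if u = i then (1:ℝ) else 0) * (if u = k then 1 else 0))
        + (-((1 - s) * (if j = l then (1:ℝ) else 0)))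
          * ((if u = i then (1:ℝ) else 0) * A k u)
        + (-((1 - s) * (if j = l then (1:ℝ) else 0)))
          * (A i u * (if u = k then (1:ℝ) else 0))
        + ((1 - s) * (1 - s) * (if j = l then (1:ℝ) else 0)) * (A i u * A k u)
        + (-(s * X k j)) * ((if u = i then (1:ℝ) else 0) * X u l)
        + (s * (1 - s) * X k j) * (A i u * X u l)
        + (-(s * X i l)) * ((if u = k then (1:ℝ) else 0) * X u j)
        + (s * (1 - s) * X i l) * (A k u * X u j)
        + (s * s * A i k) * (X u j * X u l) := by
    intro u; ring
  rw [Finset.sum_congr rfl fun u _ => expand2 u]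
  simp only [Finset.sum_add_distrib, ← Finset.mul_sum]
  -- u-atoms
  have S1 : ∑ u : Fin n, (if u = i then (1:ℝ) else 0) * (if u = k then 1 else 0)
      = if i = k then (1:ℝ) else 0 := by simp [ite_and, Finset.sum_ite_eq', eq_comm]
  have S2 : ∑ u : Fin n, (if u = i then (1:ℝ) else 0) * A k u = A k i := by simp
  have S3 : ∑ u : Fin n, A i u * (if u = k then (1:ℝ) else 0) = A i k := by simp
  have S5 : ∑ u : Fin n, (if u = i then (1:ℝ) else 0) * X u l = X i l := by simp
  have S7 : ∑ u : Fin n, (if u = k then (1:ℝ) else 0) * X u j = X k j := by simp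
  rw [S1, S2, S3, S5, S7, hS4 i k, hS6 i l, hS6 k j, hcol j l]
  have hsym' := hsym k i
  linear_combination (2 * (A i k * (if j = l then (1:ℝ) else 0) - X i l * X k j)) * hs
    + (-(1 - s) * (if j = l then (1:ℝ) else 0)) * hsym'
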